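/- Let $G$ be a finite group and suppose $g \in G$ can be written as $g = g_1 g_2$ where $g_1$ is a $p'$-element, $g_2$ is a $p$-element, $g_1 g_2 = g_2 g_1$. If $p$ does not divide $|g^G|$ and $|g_2^G|$ is a power of $p$, then $g_2 \in Z(G)$. -/

import Mathlib

lemma card_conj_eq_index {G : Type*} [Group G] (a : G) :
    Nat.card {y : G | IsConj a y} = (Subgroup.centralizer ({a} : Set G)).index := by
  have h1 : {y : G | IsConj a y} = MulAction.orbit (ConjAct G) a := by
    ext y
    rw [Set.mem_setOf_eq, ConjAct.mem_orbit_conjAct]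
    exact isConj_comm
  rw [Nat.card_coe_set_eq, h1, ← MulAction.index_stabilizer,
    Subgroup.centralizer_eq_comap_stabilizer]
  exact (Subgroup.index_comap_of_surjective _ ConjAct.toConjAct.surjective).symm

theorem p_part_central {G : Type*} [Group G] [Finite G] (p : ℕ) (hp : p.Prime)
    (g₁ g₂ : G) (hc : Commute g₁ g₂)
    (h₁ : Nat.Coprime (orderOf g₁) p) (h₂ : ∃ k : ℕ, orderOf g₂ = p ^ k)
    (hg : ¬ p ∣ Nat.card {y : G | IsConj (g₁ * g₂) y})
    (hg₂ : ∃ k : ℕ, Nat.card {y : G | IsConj g₂ y} = p ^ k) :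
    g₂ ∈ Subgroup.center G := by
  obtain ⟨k, hk⟩ := h₂
  have hco : (orderOf g₁).Coprime (orderOf g₂) := by
    rw [hk]; exact h₁.pow_right k
  obtain ⟨m, hm₁, hm₂⟩ := Nat.chineseRemainder hco 0 1
  have hpow : (g₁ * g₂) ^ (m : ℕ) = g₂ := by
    rw [hc.mul_pow]
    have e1 : g₁ ^ (m : ℕ) = 1 := by
      rw [← pow_zero g₁, pow_eq_pow_iff_modEq]; exact hm₁
    have e2 : g₂ ^ (m : ℕ) = g₂ ^ 1 :=
      pow_eq_pow_iff_modEq.mpr (by simpa using hm₂)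
    rw [pow_one] at e2
    rw [e1, e2, one_mul]
  have hle : Subgroup.centralizer ({g₁ * g₂} : Set G) ≤
      Subgroup.centralizer ({g₂} : Set G) := by
    intro x hx
    rw [Subgroup.mem_centralizer_singleton_iff] at hx ⊢
    have hcom : Commute x ((g₁ * g₂) ^ (m : ℕ)) := Commute.pow_right hx (m : ℕ)
    rw [hpow] at hcom
    exact hcom
  rw [card_conj_eq_index] at hg
  obtain ⟨k', hk'⟩ := hg₂
  rw [card_conj_eq_index] at hk'
  have hdvd : (Subgroup.centralizer ({g₂} : Set G)).index ∣
      (Subgroup.centralizer ({g₁ * g₂} : Set G)).index :=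
    Subgroup.index_dvd_of_le hle
  have hnp : ¬ p ∣ (Subgroup.centralizer ({g₂} : Set G)).index :=
    fun h => hg (h.trans hdvd)
  have hk0 : k' = 0 := by
    by_contra h
    exact hnp (hk' ▸ dvd_pow_self p h)
  rw [hk0, pow_zero, Subgroup.index_eq_one] at hk'
  have := Subgroup.centralizer_eq_top_iff_subset.mp hk'
  exact this rfl
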